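/- Let H be a k-uniform hypergraph admitting a proper 2-coloring of its vertices (no edge monochromatic), and let G be the bipartite vertex-edge incidence graph of H, with parts V(H) and E(H). Then G has a color-blind distinguishing 2-edge-coloring, i.e., dal(G) ≤ 2. -/

import Mathlib

open Finset

/-- The color-blind partition of `v`: the multiset of (nonzero) counts of incident
edges of each color, i.e. the partition of `deg v` with trailing zeroes removed. -/
def cbp {V : Type*} [Fintype V] [DecidableEq V] (G : SimpleGraph V) [DecidableRel G.Adj]
    {k : ℕ} (c : Sym2 V → Fin k) (v : V) : Multiset ℕ :=
  (((Finset.univ : Finset (Fin k)).val.map fun i =>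
    ((G.neighborFinset v).filter fun w => c s(v, w) = i).card).filter fun m => m ≠ 0)

/-- `c` is a color-blind distinguishing edge-coloring of `G`. -/
def IsCBD {V : Type*} [Fintype V] [DecidableEq V] (G : SimpleGraph V) [DecidableRel G.Adj]
    {k : ℕ} (c : Sym2 V → Fin k) : Prop :=
  ∀ u v : V, G.Adj u v → cbp G c u ≠ cbp G c v

/-- The vertex-edge incidence graph of a hypergraph with vertex set U and edge set E. -/
def incidenceGraph {U : Type*} [DecidableEq U] (E : Finset (Finset U)) :
    SimpleGraph (U ⊕ {e // e ∈ E}) where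
  Adj a b := match a, b with
    | Sum.inl v, Sum.inr e => v ∈ e.1
    | Sum.inr e, Sum.inl v => v ∈ e.1
    | _, _ => False
  symm := ⟨by rintro (v | e) (w | f) h <;> exact h⟩
  loopless := ⟨by rintro (v | e) h <;> exact h⟩

instance {U : Type*} [DecidableEq U] (E : Finset (Finset U)) :
    DecidableRel (incidenceGraph E).Adj := fun a b =>
  match a, b with
  | Sum.inl v, Sum.inr e => inferInstanceAs (Decidable (v ∈ e.1))
  | Sum.inr e, Sum.inl v => inferInstanceAs (Decidable (v ∈ e.1))
  | Sum.inl _, Sum.inl _ => inferInstanceAs (Decidable False)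
  | Sum.inr _, Sum.inr _ => inferInstanceAs (Decidable False)

lemma univFin2 : (Finset.univ : Finset (Fin 2)).val = {0, 1} := by decide

lemma cbp_two {V : Type*} [Fintype V] [DecidableEq V] (G : SimpleGraph V) [DecidableRel G.Adj]
    (c : Sym2 V → Fin 2) (v : V) :
    cbp G c v = Multiset.filter (fun m => m ≠ 0)
      {((G.neighborFinset v).filter fun w => c s(v, w) = 0).card,
       ((G.neighborFinset v).filter fun w => c s(v, w) = 1).card} := by
  rw [cbp, univFin2]
  rfl

lemma card_filter_pair_pos {a b : ℕ} (ha : a ≠ 0) (hb : b ≠ 0) :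
    (Multiset.filter (fun m => m ≠ 0) ({a, b} : Multiset ℕ)).card = 2 := by
  simp [Multiset.filter_cons, Multiset.filter_singleton, ha, hb]

lemma card_filter_pair_right {a : ℕ} (ha : a ≠ 0) :
    (Multiset.filter (fun m => m ≠ 0) ({(0 : ℕ), a} : Multiset ℕ)).card = 1 := by
  simp [Multiset.filter_cons, Multiset.filter_singleton, ha]

lemma card_filter_pair_left {a : ℕ} (ha : a ≠ 0) :
    (Multiset.filter (fun m => m ≠ 0) ({a, (0 : ℕ)} : Multiset ℕ)).card = 1 := by
  simp [Multiset.filter_cons, Multiset.filter_singleton, ha]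

theorem incidence_graph_of_two_colorable_dal_le_two
    {U : Type*} [Fintype U] [DecidableEq U] (k : ℕ) (E : Finset (Finset U))
    (huni : ∀ e ∈ E, e.card = k)
    (h2col : ∃ f : U → Bool, ∀ e ∈ E, (∃ v ∈ e, f v = true) ∧ (∃ v ∈ e, f v = false)) :
    ∃ c : Sym2 (U ⊕ {e // e ∈ E}) → Fin 2, IsCBD (incidenceGraph E) c := by
  classical
  obtain ⟨f, hf⟩ := h2col
  set c : Sym2 (U ⊕ {e // e ∈ E}) → Fin 2 :=
    Sym2.lift ⟨fun a b => match a, b with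
      | Sum.inl v, Sum.inr _ => if f v then 1 else 0
      | Sum.inr _, Sum.inl v => if f v then 1 else 0
      | _, _ => 0,
      by rintro (v | e) (w | g) <;> rfl⟩ with hc
  have hcvl : ∀ (v : U) (e : {e // e ∈ E}), c s(Sum.inl v, Sum.inr e) = if f v then 1 else 0 :=
    fun v e => rfl
  -- cards
  have hcardL : ∀ (v : U) (e : {e // e ∈ E}), v ∈ e.1 →
      (cbp (incidenceGraph E) c (Sum.inl v)).card = 1 := by
    intro v e hve
    have hdeg : ((incidenceGraph E).neighborFinset (Sum.inl v)).Nonempty :=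
      ⟨Sum.inr e, (SimpleGraph.mem_neighborFinset _ _ _).mpr hve⟩
    have hall : ∀ w ∈ (incidenceGraph E).neighborFinset (Sum.inl v),
        c s(Sum.inl v, w) = if f v then 1 else 0 := by
      rintro (w | g) hw
      · exact absurd (SimpleGraph.mem_neighborFinset _ _ _ |>.mp hw) (by simp [incidenceGraph])
      · exact hcvl v g
    rw [cbp_two]
    cases hfv : f v with
    | true =>
      have h0 : ((incidenceGraph E).neighborFinset (Sum.inl v)).filter
          (fun w => c s(Sum.inl v, w) = 0) = ∅ := by
        apply Finset.filter_eq_empty_iff.mpr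
        intro w hw
        rw [hall w hw, hfv]
        decide
      have h1 : ((incidenceGraph E).neighborFinset (Sum.inl v)).filter
          (fun w => c s(Sum.inl v, w) = 1) = (incidenceGraph E).neighborFinset (Sum.inl v) := by
        apply Finset.filter_eq_self.mpr
        intro w hw
        rw [hall w hw, hfv]; rfl
      rw [h0, h1]
      exact card_filter_pair_right (Finset.card_ne_zero.mpr hdeg)
    | false =>
      have h1 : ((incidenceGraph E).neighborFinset (Sum.inl v)).filter
          (fun w => c s(Sum.inl v, w) = 1) = ∅ := by
        apply Finset.filter_eq_empty_iff.mpr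
        intro w hw
        rw [hall w hw, hfv]
        decide
      have h0 : ((incidenceGraph E).neighborFinset (Sum.inl v)).filter
          (fun w => c s(Sum.inl v, w) = 0) = (incidenceGraph E).neighborFinset (Sum.inl v) := by
        apply Finset.filter_eq_self.mpr
        intro w hw
        rw [hall w hw, hfv]; rfl
      rw [h0, h1]
      exact card_filter_pair_left (Finset.card_ne_zero.mpr hdeg)
  have hcardR : ∀ (e : {e // e ∈ E}),
      (cbp (incidenceGraph E) c (Sum.inr e)).card = 2 := by
    intro e
    obtain ⟨⟨vt, hvt, hft⟩, ⟨vf, hvf, hff⟩⟩ := hf e.1 e.2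
    rw [cbp_two]
    have hmemT : Sum.inl vt ∈ ((incidenceGraph E).neighborFinset (Sum.inr e)).filter
        (fun w => c s(Sum.inr e, w) = 1) := by
      rw [Finset.mem_filter]
      refine ⟨(SimpleGraph.mem_neighborFinset _ _ _).mpr hvt, ?_⟩
      show c s(Sum.inr e, Sum.inl vt) = 1
      rw [Sym2.eq_swap]
      rw [hcvl vt e, hft]; rfl
    have hmemF : Sum.inl vf ∈ ((incidenceGraph E).neighborFinset (Sum.inr e)).filter
        (fun w => c s(Sum.inr e, w) = 0) := by
      rw [Finset.mem_filter]
      refine ⟨(SimpleGraph.mem_neighborFinset _ _ _).mpr hvf, ?_⟩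
      show c s(Sum.inr e, Sum.inl vf) = 0
      rw [Sym2.eq_swap]
      rw [hcvl vf e, hff]; rfl
    exact card_filter_pair_pos
      (Finset.card_ne_zero.mpr ⟨_, hmemF⟩) (Finset.card_ne_zero.mpr ⟨_, hmemT⟩)
  refine ⟨c, ?_⟩
  rintro (v | e) (w | g) hadj
  · exact absurd hadj (by simp [incidenceGraph])
  · intro h
    have := congrArg Multiset.card h
    rw [hcardL v g hadj, hcardR g] at this
    exact absurd this (by decide)
  · intro h
    have := congrArg Multiset.card h
    rw [hcardR e, hcardL w e hadj] at this
    exact absurd this (by decide)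
  · exact absurd hadj (by simp [incidenceGraph])
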